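/- Let K be a field of characteristic zero, C a d-uniform clutter on vertex set [n], J = I(C) ⊆ K[x_1,...,x_n] its facet ideal, and Θ the Jacobian matrix of the minimal monomial generators of J. Let r be a positive integer. If a monomial u = x_{i_1}^{β_1} ⋯ x_{i_m}^{β_m} (with i_1,...,i_m distinct and all β_j ≥ 1) belongs to the ideal I_r(Θ) of r×r minors of Θ, then α({i_1,...,i_m}) ≥ r. -/

import Mathlib

/-- The ideal `I_r(M)` generated by all `r × r` minors of a matrix `M`. -/
noncomputable def minorsIdeal {R : Type} [CommRing R] {ι κ : Type} (r : ℕ)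
    (M : Matrix ι κ R) : Ideal R :=
  Ideal.span {p | ∃ (ρ : Fin r → ι) (γ : Fin r → κ),
    Function.Injective ρ ∧ Function.Injective γ ∧ p = (M.submatrix ρ γ).det}

/-- The Jacobian matrix of the (minimal monomial) generators `x_F`, `F ∈ C`, of the facet
ideal of a clutter `C`: rows indexed by the circuits, columns by the variables, with
`(F, j)` entry `∂(x_F)/∂x_j`. -/
noncomputable def clutterJacobian (K : Type) [Field K] {n : ℕ}
    (C : Set (Finset (Fin n))) : Matrix C (Fin n) (MvPolynomial (Fin n) K) :=
  Matrix.of fun F j => MvPolynomial.pderiv j (∏ i ∈ (F : Finset (Fin n)), MvPolynomial.X i)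

/-- For a `d`-uniform clutter `C` on `[n]` and `A ⊆ [n]`, `α(A)` is the maximum of
`|N(e_1, …, e_s)|` over all nonempty finite collections `e_1, …, e_s` of submaximal
circuits of `C` (`(d-1)`-subsets `e ⊂ F` of some `F ∈ C`) that are `(d-1)`-subsets of
`A`, where `N(e) = { v : e ∪ {v} ∈ C }` and `N(e_1,…,e_s) = N(e_1) ∪ ⋯ ∪ N(e_s)`. -/
noncomputable def clutterAlpha {n : ℕ} (C : Set (Finset (Fin n))) (d : ℕ)
    (A : Set (Fin n)) : ℕ :=
  sSup {r : ℕ | ∃ E : Finset (Finset (Fin n)), E.Nonempty ∧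
    (∀ e ∈ E, (↑e : Set (Fin n)) ⊆ A ∧ e.card = d - 1 ∧ ∃ F ∈ C, e ⊂ F) ∧
    r = Set.ncard {v : Fin n | ∃ e ∈ E, insert v e ∈ C}}

open MvPolynomial

lemma prod_monomial_one {K : Type} [Field K] {n : ℕ} {α : Type*} (s : Finset α)
    (f : α → (Fin n →₀ ℕ)) :
    ∏ a ∈ s, (monomial (f a) (1 : K)) = monomial (∑ a ∈ s, f a) 1 := by
  classical
  induction s using Finset.induction with
  | empty => simp
  | insert _ _ h ih =>
    rw [Finset.prod_insert h, Finset.sum_insert h, ih, monomial_mul, one_mul]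

lemma prod_X_eq_monomial' {K : Type} [Field K] {n : ℕ} (F : Finset (Fin n)) :
    ∏ i ∈ F, (X i : MvPolynomial (Fin n) K) =
      monomial (∑ i ∈ F, Finsupp.single i 1) 1 := by
  rw [← prod_monomial_one]
  refine Finset.prod_congr rfl fun i _ => ?_
  rw [← X_pow_eq_monomial, pow_one]

lemma sum_single_one_apply {n : ℕ} (F : Finset (Fin n)) (j : Fin n) :
    (∑ i ∈ F, Finsupp.single i (1:ℕ)) j = if j ∈ F then 1 else 0 := by
  classical
  rw [Finset.sum_apply']
  by_cases hj : j ∈ F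
  · rw [if_pos hj, Finset.sum_eq_single j]
    · simp
    · intro b _ hb; simp [Finsupp.single_apply, hb]
    · intro h; exact absurd hj h
  · rw [if_neg hj]
    apply Finset.sum_eq_zero
    intro b hb
    rw [Finsupp.single_apply, if_neg]
    rintro rfl; exact hj hb

lemma pderiv_prod_X {K : Type} [Field K] {n : ℕ} (F : Finset (Fin n)) (j : Fin n) :
    pderiv j (∏ i ∈ F, (X i : MvPolynomial (Fin n) K)) =
      if j ∈ F then ∏ i ∈ F.erase j, (X i : MvPolynomial (Fin n) K) else 0 := by
  classical
  rw [prod_X_eq_monomial', pderiv_monomial, sum_single_one_apply]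
  by_cases hj : j ∈ F
  · rw [if_pos hj, if_pos hj]
    have hs : (∑ i ∈ F, Finsupp.single i (1:ℕ)) =
        Finsupp.single j 1 + ∑ i ∈ F.erase j, Finsupp.single i 1 :=
      (Finset.add_sum_erase F (fun i => Finsupp.single i (1:ℕ)) hj).symm
    rw [hs, add_tsub_cancel_left, prod_X_eq_monomial']
    norm_num
  · rw [if_neg hj, if_neg hj]
    norm_num

/-- Let `K` have characteristic zero, `C` a `d`-uniform clutter on
`[n]`, `J = I(C)` its facet ideal with Jacobian matrix `Θ`, and `r ≥ 1`.  If a monomial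
`u = x_{i_1}^{β_1} ⋯ x_{i_m}^{β_m}` (the `i_j` distinct, all `β_j ≥ 1`) belongs to
`I_r(Θ)`, then `α({i_1, …, i_m}) ≥ r`. -/
theorem alpha_ge_of_monomial_mem_minors {K : Type} [Field K] [CharZero K] {n d : ℕ}
    (C : Set (Finset (Fin n))) (hC : ∀ F ∈ C, F.card = d)
    (r : ℕ) (hr : 1 ≤ r)
    {m : ℕ} (i : Fin m → Fin n) (hi : Function.Injective i)
    (β : Fin m → ℕ) (hβ : ∀ j, 1 ≤ β j)
    (hu : (∏ j, MvPolynomial.X (i j) ^ β j) ∈ minorsIdeal r (clutterJacobian K C)) :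
    r ≤ clutterAlpha C d (Set.range i) := by
  classical
  set S : Set (MvPolynomial (Fin n) K) := {p | ∃ (ρ : Fin r → C) (γ : Fin r → Fin n),
    Function.Injective ρ ∧ Function.Injective γ ∧
    p = ((clutterJacobian K C).submatrix ρ γ).det} with hS
  set T : Set ((Fin n) →₀ ℕ) := {t | ∃ p ∈ S, t ∈ p.support} with hT
  have hspan : minorsIdeal r (clutterJacobian K C) ≤
      Ideal.span ((fun s => monomial s (1:K)) '' T) := by
    rw [minorsIdeal, Ideal.span_le]
    intro p hp
    rw [← p.support_sum_monomial_coeff]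
    apply Ideal.sum_mem
    intro t ht
    have h1 : (monomial t) (coeff t p) = MvPolynomial.C (coeff t p) * monomial t 1 := by
      rw [C_mul_monomial, mul_one]
    rw [h1]
    exact Ideal.mul_mem_left _ _ (Ideal.subset_span ⟨t, ⟨p, hp, ht⟩, rfl⟩)
  have hu' := hspan hu
  set b : Fin n →₀ ℕ := ∑ j, Finsupp.single (i j) (β j) with hb
  have hub : (∏ j, (X (i j) : MvPolynomial (Fin n) K) ^ β j) = monomial b 1 := by
    rw [hb, ← prod_monomial_one]
    exact Finset.prod_congr rfl fun j _ => X_pow_eq_monomial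
  rw [hub] at hu'
  obtain ⟨t, htT, htb⟩ := mem_ideal_span_monomial_image.mp hu' b (by
    rw [support_monomial, if_neg one_ne_zero]; exact Finset.mem_singleton_self b)
  obtain ⟨p, hpS, htp⟩ := htT
  obtain ⟨ρ, γ, hρ, hγ, rfl⟩ := hpS
  rw [Matrix.det_apply] at htp
  have htp2 := MvPolynomial.support_sum htp
  obtain ⟨σ, -, htσ⟩ := Finset.mem_biUnion.mp htp2
  have htσ' := MvPolynomial.support_smul htσ
  set F : Fin r → Finset (Fin n) := fun l => (ρ (σ l) : Finset (Fin n)) with hF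
  have hentry : ∀ k, ((clutterJacobian K C).submatrix ρ γ) (σ k) k =
      pderiv (γ k) (∏ i ∈ F k, (X i : MvPolynomial (Fin n) K)) := fun k => rfl
  have hall : ∀ k, γ k ∈ F k := by
    by_contra hnot
    push_neg at hnot
    obtain ⟨k, hk⟩ := hnot
    have : (∏ k, ((clutterJacobian K C).submatrix ρ γ) (σ k) k) = 0 := by
      apply Finset.prod_eq_zero (Finset.mem_univ k)
      rw [hentry k, pderiv_prod_X, if_neg hk]
    rw [this] at htσ'
    simp at htσ'
  have hprod : (∏ k, ((clutterJacobian K C).submatrix ρ γ) (σ k) k) =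
      monomial (∑ k, ∑ v ∈ (F k).erase (γ k), Finsupp.single v 1) 1 := by
    rw [← prod_monomial_one]
    refine Finset.prod_congr rfl fun k _ => ?_
    rw [hentry k, pderiv_prod_X, if_pos (hall k), prod_X_eq_monomial']
  rw [hprod, support_monomial, if_neg one_ne_zero, Finset.mem_singleton] at htσ'
  subst htσ'
  -- key: vertices in the erased circuits lie in the support of u
  have hsub : ∀ k, ∀ v ∈ (F k).erase (γ k), v ∈ Set.range i := by
    intro k v hv
    have h2 : (1:ℕ) ≤ (∑ k' : Fin r, ∑ v' ∈ (F k').erase (γ k'), Finsupp.single v' (1:ℕ)) v := by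
      rw [Finset.sum_apply']
      calc (1:ℕ) = (∑ v' ∈ (F k).erase (γ k), Finsupp.single v' (1:ℕ)) v := by
            rw [sum_single_one_apply, if_pos hv]
        _ ≤ _ := Finset.single_le_sum
            (f := fun k' => (∑ v' ∈ (F k').erase (γ k'), Finsupp.single v' (1:ℕ)) v)
            (fun _ _ => Nat.zero_le _) (Finset.mem_univ k)
    have h3 : (1:ℕ) ≤ b v := le_trans h2 (htb v)
    by_contra hvr
    have hbv : b v = 0 := by
      rw [hb, Finset.sum_apply']
      apply Finset.sum_eq_zero
      intro j _
      rw [Finsupp.single_apply, if_neg]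
      intro hij; exact hvr ⟨j, hij⟩
    omega
  -- build the collection E of submaximal circuits
  haveI : Nonempty (Fin r) := ⟨⟨0, hr⟩⟩
  set E : Finset (Finset (Fin n)) :=
    Finset.image (fun k => (F k).erase (γ k)) Finset.univ with hE
  have hEmem : ∀ e ∈ E, (↑e : Set (Fin n)) ⊆ Set.range i ∧ e.card = d - 1 ∧
      ∃ F' ∈ C, e ⊂ F' := by
    intro e he
    obtain ⟨k, -, rfl⟩ := Finset.mem_image.mp he
    refine ⟨fun v hv => hsub k v hv, ?_, ⟨F k, (ρ (σ k)).2, Finset.erase_ssubset (hall k)⟩⟩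
    rw [Finset.card_erase_of_mem (hall k), hC _ (ρ (σ k)).2]
  set N : Set (Fin n) := {v : Fin n | ∃ e ∈ E, insert v e ∈ C} with hN
  have hγN : Set.range γ ⊆ N := by
    rintro v ⟨k, rfl⟩
    exact ⟨(F k).erase (γ k), Finset.mem_image.mpr ⟨k, Finset.mem_univ k, rfl⟩,
      by rw [Finset.insert_erase (hall k)]; exact (ρ (σ k)).2⟩
  have hrN : r ≤ N.ncard := by
    have h1 : (Set.range γ).ncard = r := by
      rw [← Set.image_univ, ← Finset.coe_univ, ← Finset.coe_image,
        Set.ncard_coe_finset, Finset.card_image_of_injective _ hγ, Finset.card_univ,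
        Fintype.card_fin]
    rw [← h1]
    exact Set.ncard_le_ncard hγN N.toFinite
  refine le_trans hrN (le_csSup ?_ ⟨E, Finset.image_nonempty.mpr Finset.univ_nonempty, hEmem, rfl⟩)
  refine ⟨n, fun x hx => ?_⟩
  obtain ⟨E', -, -, rfl⟩ := hx
  calc Set.ncard {v : Fin n | ∃ e ∈ E', insert v e ∈ C}
      ≤ (Set.univ : Set (Fin n)).ncard := Set.ncard_le_ncard (Set.subset_univ _) Set.finite_univ
    _ = n := by rw [Set.ncard_univ, Nat.card_eq_fintype_card, Fintype.card_fin]
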